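/- Let α > 0, β > 0 with β > α + 2, and define φ(F) = (∫₀^F x^α (1+x)^{-β} dx)/(∫₀^F x^{α-1}(1+x)^{-β} dx) for F > 0. Then φ(F) ≤ α/(β - α - 2) for all F > 0. -/

import Mathlib

open MeasureTheory intervalIntegral Set

theorem stmt_3 (α β : ℝ) (hα : 0 < α) (hβ : 0 < β) (hβα : β > α + 2)
    (F : ℝ) (hF : 0 < F) :
    (∫ x in (0:ℝ)..F, x ^ α * (1 + x) ^ (-β)) /
      (∫ x in (0:ℝ)..F, x ^ (α - 1) * (1 + x) ^ (-β)) ≤ α / (β - α - 2) := by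
  have hβ1 : 0 < β - α - 1 := by linarith
  have hβ2 : 0 < β - α - 2 := by linarith
  set N := ∫ x in (0:ℝ)..F, x ^ α * (1 + x) ^ (-β) with hNdef
  set D := ∫ x in (0:ℝ)..F, x ^ (α - 1) * (1 + x) ^ (-β) with hDdef
  have huIcc : Set.uIcc (0:ℝ) F = Set.Icc 0 F := Set.uIcc_of_le hF.le
  have hcont1x : ContinuousOn (fun x : ℝ => (1 + x) ^ (-β)) (Set.uIcc 0 F) := by
    apply ContinuousOn.rpow_const (by fun_prop)
    intro x hx
    rw [huIcc] at hx
    left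
    have : (0:ℝ) ≤ x := hx.1
    positivity
  have hiN : IntervalIntegrable (fun x : ℝ => x ^ α * (1 + x) ^ (-β)) volume 0 F := by
    apply ContinuousOn.intervalIntegrable
    apply ContinuousOn.mul _ hcont1x
    exact fun x _ => (Real.continuousAt_rpow_const x α (Or.inr hα.le)).continuousWithinAt
  have hiD : IntervalIntegrable (fun x : ℝ => x ^ (α - 1) * (1 + x) ^ (-β)) volume 0 F := by
    have h1 : IntervalIntegrable (fun x : ℝ => x ^ (α - 1)) volume 0 F :=
      intervalIntegrable_rpow' (by linarith)
    exact h1.mul_continuousOn hcont1x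
  have hderiv : ∀ x ∈ Set.Ioo (0:ℝ) F,
      HasDerivAt (fun x : ℝ => x ^ α * (1 + x) ^ (1 - β))
        (α * (x ^ (α - 1) * (1 + x) ^ (-β)) - (β - α - 1) * (x ^ α * (1 + x) ^ (-β))) x := by
    intro x hx
    have hx0 : 0 < x := hx.1
    have h1x : (0:ℝ) < 1 + x := by linarith
    have h1 : HasDerivAt (fun x : ℝ => x ^ α) (α * x ^ (α - 1)) x :=
      Real.hasDerivAt_rpow_const (Or.inl hx0.ne')
    have h3 : HasDerivAt (fun x : ℝ => 1 + x) 1 x := by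
      simpa using (hasDerivAt_id x).const_add (1:ℝ)
    have h2 : HasDerivAt (fun x : ℝ => (1 + x) ^ (1 - β))
        ((1 - β) * (1 + x) ^ (1 - β - 1)) x := by
      convert h3.rpow_const (p := 1 - β) (Or.inl h1x.ne') using 1
      ring
    have hmul := h1.mul h2
    refine hmul.congr_deriv ?_
    have eβ : (1 + x) ^ (1 - β) = (1 + x) * (1 + x) ^ (-β) := by
      rw [show (1:ℝ) - β = 1 + (-β) by ring, Real.rpow_add h1x, Real.rpow_one]
    have eβ' : (1 + x) ^ (1 - β - 1) = (1 + x) ^ (-β) := by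
      congr 1; ring
    have eα : x ^ (α - 1) * x = x ^ α := by
      rw [← Real.rpow_add_one hx0.ne']; ring_nf
    rw [eβ, eβ', ← eα]
    ring
  have hcontf : ContinuousOn (fun x : ℝ => x ^ α * (1 + x) ^ (1 - β)) (Set.Icc 0 F) := by
    apply ContinuousOn.mul
    · exact fun x _ => (Real.continuousAt_rpow_const x α (Or.inr hα.le)).continuousWithinAt
    · apply ContinuousOn.rpow_const (by fun_prop)
      intro x hx
      left
      have : (0:ℝ) ≤ x := hx.1
      positivity
  have hig : IntervalIntegrable (fun x : ℝ =>
      α * (x ^ (α - 1) * (1 + x) ^ (-β)) - (β - α - 1) * (x ^ α * (1 + x) ^ (-β)))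
      volume 0 F := (hiD.const_mul α).sub (hiN.const_mul _)
  have key : (∫ x in (0:ℝ)..F,
      (α * (x ^ (α - 1) * (1 + x) ^ (-β)) - (β - α - 1) * (x ^ α * (1 + x) ^ (-β))))
      = F ^ α * (1 + F) ^ (1 - β) - (0:ℝ) ^ α * (1 + 0:ℝ) ^ (1 - β) :=
    intervalIntegral.integral_eq_sub_of_hasDeriv_right_of_le hF.le hcontf
      (fun x hx => (hderiv x hx).hasDerivWithinAt) hig
  have split : (∫ x in (0:ℝ)..F,
      (α * (x ^ (α - 1) * (1 + x) ^ (-β)) - (β - α - 1) * (x ^ α * (1 + x) ^ (-β))))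
      = α * D - (β - α - 1) * N := by
    rw [intervalIntegral.integral_sub (hiD.const_mul α) (hiN.const_mul _),
      intervalIntegral.integral_const_mul, intervalIntegral.integral_const_mul]
  have hkey : α * D - (β - α - 1) * N = F ^ α * (1 + F) ^ (1 - β) := by
    rw [← split, key, Real.zero_rpow hα.ne']
    ring
  have hrhs : 0 ≤ F ^ α * (1 + F) ^ (1 - β) := by positivity
  have hDpos : 0 < D := by
    apply intervalIntegral.intervalIntegral_pos_of_pos_on hiD _ hF
    intro x hx
    have hx0 : 0 < x := hx.1
    have h1x : (0:ℝ) < 1 + x := by linarith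
    positivity
  have hNnn : 0 ≤ N := by
    apply intervalIntegral.integral_nonneg hF.le
    intro x hx
    have hx0 : (0:ℝ) ≤ x := hx.1
    have h1x : (0:ℝ) < 1 + x := by linarith
    positivity
  rw [div_le_div_iff₀ hDpos hβ2]
  nlinarith [hkey, hrhs, hNnn]
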